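/- For integers q ≥ 2 and real x ≥ q, F_q(x) ≥ x^{(log_q(x)−3)/2} / Γ(log_q(x) + 1), where F_q(x) = Σ_{n≥0} x^n/(n!·q^{n(n+1)/2}) and Γ is the Gamma function. -/
import Mathlib


/-- `F_q(x) = Σ_{n≥0} x^n/(n!·q^{n(n+1)/2})`. -/
noncomputable def Fq (q : ℕ) (x : ℝ) : ℝ :=
  ∑' n : ℕ, x ^ n / (n.factorial * (q : ℝ) ^ (n * (n + 1) / 2))

/-- for `q ≥ 2` and `x ≥ q`,
`F_q(x) ≥ x^{(log_q(x)−3)/2} / Γ(log_q(x) + 1)`. -/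
theorem stmt_11 (q : ℕ) (hq : 2 ≤ q) (x : ℝ) (hx : (q : ℝ) ≤ x) :
    x ^ ((Real.logb q x - 3) / 2) / Real.Gamma (Real.logb q x + 1) ≤ Fq q x := by
  have hq1 : (1 : ℝ) < q := by exact_mod_cast hq.trans_lt' one_lt_two
  have hq0 : (0 : ℝ) < q := lt_trans one_pos hq1
  have hx1 : (1 : ℝ) ≤ x := le_trans hq1.le hx
  have hx0 : (0 : ℝ) < x := lt_of_lt_of_le one_pos hx1
  set L := Real.logb q x with hLdef
  have hL1 : 1 ≤ L := by
    rw [hLdef, show (1:ℝ) = Real.logb q q from (Real.logb_self_eq_one hq1).symm]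
    exact Real.logb_le_logb_of_le hq1 hq0 hx
  have hL0 : 0 ≤ L := le_trans zero_le_one hL1
  set n := ⌊L⌋₊ with hndef
  have hnL : (n : ℝ) ≤ L := Nat.floor_le hL0
  have hLn : L < n + 1 := Nat.lt_floor_add_one L
  have hn1 : 1 ≤ n := by
    rw [hndef]; exact Nat.le_floor (by exact_mod_cast hL1)
  -- positivity of all terms
  have hterm_nonneg : ∀ m : ℕ, 0 ≤ x ^ m / (m.factorial * (q : ℝ) ^ (m * (m + 1) / 2)) := by
    intro m; positivity
  -- summability
  have hsum : Summable (fun m : ℕ => x ^ m / (m.factorial * (q : ℝ) ^ (m * (m + 1) / 2))) := by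
    refine Summable.of_nonneg_of_le hterm_nonneg ?_ (Real.summable_pow_div_factorial x)
    intro m
    apply div_le_div_of_nonneg_left (by positivity) (by positivity)
    have h1 : (1 : ℝ) ≤ (q : ℝ) ^ (m * (m + 1) / 2) := one_le_pow₀ hq1.le
    nlinarith [(Nat.cast_pos (α := ℝ)).mpr m.factorial_pos,
      mul_le_mul_of_nonneg_left h1 (Nat.cast_nonneg (α := ℝ) m.factorial)]
  -- single term bound
  have hle : x ^ n / ((n.factorial : ℝ) * (q : ℝ) ^ (n * (n + 1) / 2)) ≤ Fq q x :=
    Summable.le_tsum hsum n fun m _ => hterm_nonneg m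
  refine le_trans ?_ hle
  -- key estimates
  have hGpos : 0 < Real.Gamma (L + 1) := Real.Gamma_pos_of_pos (by linarith)
  -- n! = Γ(n+1) ≤ Γ(L+1)
  have hfact : (n.factorial : ℝ) ≤ Real.Gamma (L + 1) := by
    rw [← Real.Gamma_nat_eq_factorial]
    have : ((n : ℝ) + 1) ≤ L + 1 := by linarith
    have h1n : (1:ℝ) ≤ (n:ℝ) := by exact_mod_cast hn1
    exact Real.Gamma_strictMonoOn_Ici.monotoneOn
      (Set.mem_Ici.mpr (by linarith)) (Set.mem_Ici.mpr (by linarith)) this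
  -- q ^ (n(n+1)/2) ≤ x ^ ((L+1)/2)
  have hcastdiv : ((n * (n + 1) / 2 : ℕ) : ℝ) = (n : ℝ) * ((n : ℝ) + 1) / 2 := by
    rw [Nat.cast_div (Nat.even_mul_succ_self n).two_dvd (by norm_num)]
    push_cast; ring
  have hqx : (q : ℝ) ^ L = x := Real.rpow_logb hq0 hq1.ne' hx0
  have hpow : (q : ℝ) ^ (n * (n + 1) / 2) ≤ x ^ ((L + 1) / 2) := by
    rw [← Real.rpow_natCast (q : ℝ), hcastdiv, ← hqx, ← Real.rpow_mul hq0.le]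
    apply Real.rpow_le_rpow_left_iff hq1 |>.mpr
    nlinarith
  -- x^(L-1) ≤ x^n
  have hnum : x ^ ((L - 3) / 2) * x ^ ((L + 1) / 2) ≤ x ^ n := by
    rw [← Real.rpow_add hx0, ← Real.rpow_natCast x n]
    apply Real.rpow_le_rpow_of_exponent_le hx1
    linarith
  -- combine
  rw [div_le_div_iff₀ hGpos (by positivity)]
  calc x ^ ((L - 3) / 2) * ((n.factorial : ℝ) * (q : ℝ) ^ (n * (n + 1) / 2))
      ≤ x ^ ((L - 3) / 2) * (Real.Gamma (L + 1) * x ^ ((L + 1) / 2)) := by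
        apply mul_le_mul_of_nonneg_left _ (by positivity)
        exact mul_le_mul hfact hpow (by positivity) hGpos.le
    _ = (x ^ ((L - 3) / 2) * x ^ ((L + 1) / 2)) * Real.Gamma (L + 1) := by ring
    _ ≤ x ^ n * Real.Gamma (L + 1) := by
        exact mul_le_mul_of_nonneg_right hnum hGpos.le
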